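/- For every triple of integers (k,l,m) define functions B : (ℂ∖{0})² → ℂ and C : (ℂ∖{0})² → ℂ by B(x,y) = x^{k+1}·y^l/(k+1) and C(x,z) = z^m if k ≠ −1, and B(x,y) = x·y^l and C(x,z) = z^m/(2x) if k = −1 (integer powers are zpow). Then for all x, y, z ∈ ℂ∖{0}: C(x,z)·∂_x B(x,y) − B(x,y)·∂_x C(x,z) = x^k·y^l·z^m, where ∂_x denotes the complex derivative in the first variable; in particular this expression is nonvanishing on (ℂ∖{0})³. -/

import Mathlib

open Complex

/-- Example 1.10: the coefficients of the contact forms `α_{k,l,m}` on `(ℂ*)³` satisfy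
`C·∂ₓB − B·∂ₓC = x^k·y^l·z^m`, which is nonvanishing on `(ℂ∖{0})³`. -/
theorem wronskian_alpha_klm (k l m : ℤ)
    (B : ℂ → ℂ → ℂ) (C : ℂ → ℂ → ℂ)
    (hB : B = fun (x y : ℂ) =>
      if k = -1 then x * y ^ l else x ^ (k + 1) * y ^ l / ((k : ℂ) + 1))
    (hC : C = fun (x z : ℂ) => if k = -1 then z ^ m / (2 * x) else z ^ m) :
    ∀ x y z : ℂ, x ≠ 0 → y ≠ 0 → z ≠ 0 →
      C x z * deriv (fun x' => B x' y) x - B x y * deriv (fun x' => C x' z) x =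
        x ^ k * y ^ l * z ^ m ∧
      C x z * deriv (fun x' => B x' y) x - B x y * deriv (fun x' => C x' z) x ≠ 0 := by
  intro x y z hx hy hz
  subst hB hC
  have key : (fun x z : ℂ => if k = -1 then z ^ m / (2 * x) else z ^ m) x z *
      deriv (fun x' => (fun x y : ℂ =>
        if k = -1 then x * y ^ l else x ^ (k + 1) * y ^ l / ((k : ℂ) + 1)) x' y) x -
      (fun x y : ℂ => if k = -1 then x * y ^ l else x ^ (k + 1) * y ^ l / ((k : ℂ) + 1)) x y *
      deriv (fun x' => (fun x z : ℂ => if k = -1 then z ^ m / (2 * x) else z ^ m) x' z) x =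
        x ^ k * y ^ l * z ^ m := by
    by_cases hk : k = -1
    · simp only [if_pos hk]
      have hdB : deriv (fun x' : ℂ => x' * y ^ l) x = y ^ l := by
        have h := ((hasDerivAt_id x).mul_const (y ^ l)).deriv
        rw [one_mul] at h
        exact h
      have hdC : deriv (fun x' : ℂ => z ^ m / (2 * x')) x = -(z ^ m) / (2 * x ^ 2) := by
        have h1 : HasDerivAt (fun x' : ℂ => z ^ m / (2 * x')) (-(z ^ m) / (2 * x ^ 2)) x := by
          have h2 : HasDerivAt (fun x' : ℂ => x'⁻¹) (-(x ^ 2)⁻¹) x := hasDerivAt_inv hx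
          have h3 := h2.const_mul (z ^ m / 2)
          have heq : (fun x' : ℂ => z ^ m / (2 * x')) = fun x' : ℂ => z ^ m / 2 * x'⁻¹ := by
            funext x'
            rw [← div_div, div_eq_mul_inv]
          rw [heq]
          exact h3.congr_deriv (by ring)
        exact h1.deriv
      rw [hdB, hdC, hk]
      field_simp
      ring
    · simp only [if_neg hk]
      have hk' : (k : ℂ) + 1 ≠ 0 := by
        intro h
        apply hk
        have : (k : ℂ) = -1 := by linear_combination h
        exact_mod_cast this
      have hdB : deriv (fun x' : ℂ => x' ^ (k + 1) * y ^ l / ((k : ℂ) + 1)) x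
          = x ^ k * y ^ l := by
        have h2 : HasDerivAt (fun x' : ℂ => x' ^ (k + 1)) ((k + 1 : ℤ) * x ^ (k + 1 - 1)) x :=
          hasDerivAt_zpow (k + 1) x (Or.inl hx)
        have h3 := (h2.mul_const (y ^ l)).div_const ((k : ℂ) + 1)
        rw [h3.deriv]
        have : (k : ℂ) + 1 - 1 + 1 = (k : ℂ) + 1 := by ring
        push_cast
        rw [add_sub_cancel_right]
        field_simp
      have hdC : deriv (fun _ : ℂ => z ^ m) x = 0 := deriv_const x _
      rw [hdB, hdC]
      ring
  refine ⟨key, key ▸ ?_⟩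
  exact mul_ne_zero (mul_ne_zero (zpow_ne_zero _ hx) (zpow_ne_zero _ hy)) (zpow_ne_zero _ hz)
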